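/- In an acyclic schema graph, variable implication yields paths: let D be a sequence of potentially conflicting quadruples over a set of templates P whose schema graph SG is acyclic. For every pair of variables X, Y occurring in the templates of D, if X ⇒^F_D Y then there is a directed path from node type(X) to node type(Y) in SG whose sequence of edge labels is exactly F. -/

import Mathlib

/-- A relational schema: relation names and function names with a domain and a range.
Its schema graph is the directed multigraph with nodes the relation names and an edge
labelled `f` from `dom f` to `rng f` for every function name `f`. -/
structure Schema where
  Rel : Type
  Func : Type
  dom : Func → Rel
  rng : Func → Rel

/-- Directed paths in the schema graph: `IsPath S R F T` holds if `F` is the sequence of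
edge labels of a directed path from node `R` to node `T`. -/
inductive IsPath (S : Schema) : S.Rel → List S.Func → S.Rel → Prop
  | nil (R : S.Rel) : IsPath S R [] R
  | cons {R T : S.Rel} {f : S.Func} {F : List S.Func} :
      S.dom f = R → IsPath S (S.rng f) F T → IsPath S R (f :: F) T

/-- The schema graph restricted to the edges in `H` is a multi-tree: there is at most one
directed path (using only edges in `H`) between any two nodes. -/
def MultiTreeOn (S : Schema) (H : Set S.Func) : Prop :=
  ∀ (R T : S.Rel) (F F' : List S.Func),
    IsPath S R F T → IsPath S R F' T →
    (∀ f ∈ F, f ∈ H) → (∀ f ∈ F', f ∈ H) → F = F'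

/-- A disjoint partitioning of the function names into pairs `(f, pair f)` with inverse
domains and ranges, given as a fixed-point free involution. -/
structure Pairing (S : Schema) where
  pair : S.Func → S.Func
  pair_invol : ∀ f, pair (pair f) = f
  pair_ne : ∀ f, pair f ≠ f
  dom_pair : ∀ f, S.dom (pair f) = S.rng f
  rng_pair : ∀ f, S.rng (pair f) = S.dom f

/-- Every choice of one function name from each pair yields a multi-tree. -/
def Pairing.MultiTreeCond {S : Schema} (pr : Pairing S) : Prop :=
  ∀ H : Set S.Func, (∀ f, f ∈ H ↔ pr.pair f ∉ H) → MultiTreeOn S H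

/-- A transaction template: a sequence of operations over typed variables (with read and
write sets of attributes), together with equality constraints `X = f(Y)` (represented as
the triple `(X, f, Y) ∈ eqC`) and disequality constraints `X ≠ Y` ( `(X, Y) ∈ neqC` ). -/
structure Template (S : Schema) (Var Attr : Type) where
  varType : Var → S.Rel
  ops : List (Var × Finset Attr × Finset Attr)
  eqC : Set (Var × S.Func × Var)
  neqC : Set (Var × Var)
  eq_typed : ∀ c ∈ eqC, varType c.1 = S.rng c.2.1 ∧ varType c.2.2 = S.dom c.2.1
  neq_typed : ∀ c ∈ neqC, varType c.1 = varType c.2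

/-- Intra-template variable implication: `X ⇒^F_τ Y`, generated by `X ⇒^ε_τ X` and, for a
constraint `Y = f(Z)` of the template, `X ⇒^{F}_τ Z → X ⇒^{F·f}_τ Y`. -/
inductive Template.Implies {S : Schema} {Var Attr : Type}
    (τ : Template S Var Attr) : Var → List S.Func → Var → Prop
  | refl (X : Var) : Implies τ X [] X
  | step {X Z Y : Var} {F : List S.Func} {f : S.Func} :
      Implies τ X F Z → (Y, f, Z) ∈ τ.eqC → Implies τ X (F ++ [f]) Y

/-- The constraints of a template are closed under the inverse pairs:
`Y = f(X)` is a constraint iff `X = (pair f)(Y)` is. -/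
def Template.ClosedUnderPairing {S : Schema} {Var Attr : Type}
    (τ : Template S Var Attr) (pr : Pairing S) : Prop :=
  ∀ (X Y : Var) (f : S.Func), (Y, f, X) ∈ τ.eqC ↔ (X, pr.pair f, Y) ∈ τ.eqC

/-- Operations `o` of `τi` and `p` of `τj` are potentially conflicting: they are over
variables of the same type and their attribute sets intersect appropriately
(ww, wr, or rw). -/
def PotConf {S : Schema} {Var Attr : Type} [DecidableEq Attr]
    (τi τj : Template S Var Attr) (o p : Var × Finset Attr × Finset Attr) : Prop :=
  τi.varType o.1 = τj.varType p.1 ∧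
  ((o.2.2 ∩ p.2.2).Nonempty ∨ (o.2.2 ∩ p.2.1).Nonempty ∨ (o.2.1 ∩ p.2.2).Nonempty)

/-- A sequence of potentially conflicting quadruples `(τ_i, o_i, p_j, τ_j)` over an
indexed family of (variable-disjoint copies of) templates: a quadruple `(i, k, l, j)`
relates the `k`-th operation of `tmpl i` to the `l`-th operation of `tmpl j`, which must
be potentially conflicting. -/
structure PCSeq (S : Schema) (Var Attr : Type) [DecidableEq Attr] where
  m : ℕ
  tmpl : Fin m → Template S Var Attr
  quads : List (Fin m × ℕ × ℕ × Fin m)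
  wf : ∀ q ∈ quads, ∃ o p, (tmpl q.1).ops[q.2.1]? = some o ∧
      (tmpl q.2.2.2).ops[q.2.2.1]? = some p ∧ PotConf (tmpl q.1) (tmpl q.2.2.2) o p

namespace PCSeq

variable {S : Schema} {Var Attr : Type} [DecidableEq Attr]

/-- Cross-template variable implication `X ⇒^F_D Y` (variables are tagged with the index
of the template of `D` in which they occur). -/
inductive ImpliesD (D : PCSeq S Var Attr) :
    (Fin D.m × Var) → List S.Func → (Fin D.m × Var) → Prop
  | intra {i : Fin D.m} {X Y : Var} {F : List S.Func} :
      (D.tmpl i).Implies X F Y → ImpliesD D (i, X) F (i, Y)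
  | cross {q} {o p : Var × Finset Attr × Finset Attr} : q ∈ D.quads →
      (D.tmpl q.1).ops[q.2.1]? = some o →
      (D.tmpl q.2.2.2).ops[q.2.2.1]? = some p →
      ImpliesD D (q.1, o.1) [] (q.2.2.2, p.1)
  | cross' {q} {o p : Var × Finset Attr × Finset Attr} : q ∈ D.quads →
      (D.tmpl q.1).ops[q.2.1]? = some o →
      (D.tmpl q.2.2.2).ops[q.2.2.1]? = some p →
      ImpliesD D (q.2.2.2, p.1) [] (q.1, o.1)
  | trans {x z y F₁ F₂} :
      ImpliesD D x F₁ z → ImpliesD D z F₂ y → ImpliesD D x (F₁ ++ F₂) y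

/-- Connectedness of variables in `D`: `X ≈_D Y`. -/
inductive ConnD (D : PCSeq S Var Attr) : (Fin D.m × Var) → (Fin D.m × Var) → Prop
  | base {x y} : (∃ F, D.ImpliesD x F y) ∨ (∃ F, D.ImpliesD y F x) → ConnD D x y
  | ext {x z y} : ConnD D x z →
      (∃ F, D.ImpliesD z F y) ∨ (∃ F, D.ImpliesD y F z) → ConnD D x y

/-- `D` is over a set of templates admitting multi-tree bijectivity. -/
def MTB (D : PCSeq S Var Attr) (pr : Pairing S) : Prop :=
  pr.MultiTreeCond ∧ ∀ i, (D.tmpl i).ClosedUnderPairing pr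

/-- The type of a (tagged) variable occurrence. -/
def vt (D : PCSeq S Var Attr) (x : Fin D.m × Var) : S.Rel := (D.tmpl x.1).varType x.2

end PCSeq

/-- The schema graph is acyclic: there is no non-trivial directed cycle. -/
def SchemaAcyclic (S : Schema) : Prop :=
  ∀ (R : S.Rel) (F : List S.Func), IsPath S R F R → F = []


theorem IsPath.append {S : Schema} {R T U : S.Rel} {F G : List S.Func}
    (h1 : IsPath S R F T) (h2 : IsPath S T G U) : IsPath S R (F ++ G) U := by
  induction h1 with
  | nil => exact h2
  | cons hd _ ih => exact IsPath.cons hd (ih h2)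

theorem Template.Implies.isPath {S : Schema} {Var Attr : Type}
    {τ : Template S Var Attr} {X Y : Var} {F : List S.Func}
    (h : τ.Implies X F Y) : IsPath S (τ.varType X) F (τ.varType Y) := by
  induction h with
  | refl => exact IsPath.nil _
  | step _ hc ih =>
    obtain ⟨h1, h2⟩ := τ.eq_typed _ hc
    refine IsPath.append ih ?_
    rw [h1]
    exact IsPath.cons h2.symm (IsPath.nil _)

/-- Over an acyclic schema graph, variable implication yields paths:
if `X ⇒^F_D Y` then `F` labels a directed path from `type(X)` to `type(Y)` in the
schema graph. -/
theorem impliesD_isPath_of_acyclic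
    {S : Schema} {Var Attr : Type} [DecidableEq Attr]
    (hacyc : SchemaAcyclic S) (D : PCSeq S Var Attr)
    (x y : Fin D.m × Var) (F : List S.Func) (h : D.ImpliesD x F y) :
    IsPath S (D.vt x) F (D.vt y) := by
  induction h with
  | intra h => exact h.isPath
  | @cross q o p hq ho hp =>
    obtain ⟨o', p', ho', hp', hc⟩ := D.wf q hq
    obtain rfl : o = o' := Option.some_injective _ (ho.symm.trans ho')
    obtain rfl : p = p' := Option.some_injective _ (hp.symm.trans hp')
    show IsPath S _ [] _
    show IsPath S ((D.tmpl _).varType _) [] ((D.tmpl _).varType _)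
    rw [← hc.1]
    exact IsPath.nil _
  | @cross' q o p hq ho hp =>
    obtain ⟨o', p', ho', hp', hc⟩ := D.wf q hq
    obtain rfl : o = o' := Option.some_injective _ (ho.symm.trans ho')
    obtain rfl : p = p' := Option.some_injective _ (hp.symm.trans hp')
    show IsPath S _ [] _
    show IsPath S ((D.tmpl _).varType _) [] ((D.tmpl _).varType _)
    rw [hc.1]
    exact IsPath.nil _
  | trans _ _ ih1 ih2 => exact IsPath.append ih1 ih2
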